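/- Let x_u, x_v be i.i.d. Bernoulli-Rademacher random variables with parameter ρ ∈ (0,1], and let g(x_u, x_v) = exp((2x_u x_v c - θ(x_u² + x_v²)c²)/(2-2θ²c²))/√(1-θ²c²) for fixed θ ∈ (0,1) and c with θ²c² < 1. Then E[g(x_u,x_v)] = (1/√(1-θ²c²))·[(1-ρ)² + 2ρ(1-ρ)exp(-(1/ρ)·θc²/(2-2θ²c²)) + (ρ²/2)exp(c/(ρ(1+θc))) + (ρ²/2)exp(-c/(ρ(1-θc)))]. -/

import Mathlib

open MeasureTheory

lemma smul_prod' {α β : Type*} [MeasurableSpace α] [MeasurableSpace β]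
    (c : ENNReal) (μ : Measure α) (ν : Measure β) [SFinite ν] :
    (c • μ).prod ν = c • μ.prod ν := by
  ext s hs
  simp [Measure.prod_apply hs, lintegral_smul_measure]

lemma prod_smul' {α β : Type*} [MeasurableSpace α] [MeasurableSpace β]
    (c : ENNReal) (μ : Measure α) (ν : Measure β) [SFinite ν] :
    μ.prod (c • ν) = c • μ.prod ν := by
  ext s hs
  simp only [Measure.prod_apply hs, Measure.smul_apply, smul_eq_mul]
  rw [lintegral_const_mul _ (measurable_measure_prodMk_left hs)]

lemma integrable_dirac' {α : Type*} [MeasurableSpace α] [MeasurableSingletonClass α]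
    {f : α → ℝ} (hf : Measurable f) (a : α) :
    Integrable f (Measure.dirac a) :=
  ⟨hf.aestronglyMeasurable, by simp [HasFiniteIntegral, lintegral_dirac]⟩

lemma integrable_smul_dirac {α : Type*} [MeasurableSpace α] [MeasurableSingletonClass α]
    {f : α → ℝ} (hf : Measurable f) (a : α) (r : ℝ) :
    Integrable f ((ENNReal.ofReal r) • Measure.dirac a) := by
  rcases eq_or_ne (ENNReal.ofReal r) 0 with h | h
  · simp [h]
  · exact (integrable_smul_measure h ENNReal.ofReal_ne_top).2 (integrable_dirac' hf a)

lemma integrable_ofReal_smul {α : Type*} [MeasurableSpace α]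
    {f : α → ℝ} {μ : Measure α} (hf : Integrable f μ) (r : ℝ) :
    Integrable f ((ENNReal.ofReal r) • μ) := by
  rcases eq_or_ne (ENNReal.ofReal r) 0 with h | h
  · simp [h]
  · exact (integrable_smul_measure h ENNReal.ofReal_ne_top).2 hf

/-- The Bernoulli-Rademacher measure with parameter `ρ`. -/
noncomputable def bernoulliRademacher (ρ : ℝ) : Measure ℝ :=
  (ENNReal.ofReal (ρ / 2)) • Measure.dirac (1 / Real.sqrt ρ)
    + (ENNReal.ofReal (ρ / 2)) • Measure.dirac (-(1 / Real.sqrt ρ))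
    + (ENNReal.ofReal (1 - ρ)) • Measure.dirac 0

instance (ρ : ℝ) : SFinite (bernoulliRademacher ρ) := by
  unfold bernoulliRademacher; infer_instance

theorem expectation_inner_product_BR (ρ : ℝ) (hρ : ρ ∈ Set.Ioc (0 : ℝ) 1)
    (θ c : ℝ) (hθ : θ ∈ Set.Ioo (0 : ℝ) 1) (hc : θ ^ 2 * c ^ 2 < 1) :
    (∫ p : ℝ × ℝ,
        Real.exp ((2 * p.1 * p.2 * c - θ * (p.1 ^ 2 + p.2 ^ 2) * c ^ 2)
            / (2 - 2 * θ ^ 2 * c ^ 2)) / Real.sqrt (1 - θ ^ 2 * c ^ 2)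
        ∂((bernoulliRademacher ρ).prod (bernoulliRademacher ρ)))
      = (1 / Real.sqrt (1 - θ ^ 2 * c ^ 2)) *
          ((1 - ρ) ^ 2
            + 2 * ρ * (1 - ρ) * Real.exp (-(1 / ρ) * (θ * c ^ 2 / (2 - 2 * θ ^ 2 * c ^ 2)))
            + (ρ ^ 2 / 2) * Real.exp (c / (ρ * (1 + θ * c)))
            + (ρ ^ 2 / 2) * Real.exp (-c / (ρ * (1 - θ * c)))) := by
  obtain ⟨hρ0, hρ1⟩ := hρ
  obtain ⟨hθ0, hθ1⟩ := hθ
  set s : ℝ := 1 / Real.sqrt ρ with hs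
  set g : ℝ × ℝ → ℝ := fun p =>
    Real.exp ((2 * p.1 * p.2 * c - θ * (p.1 ^ 2 + p.2 ^ 2) * c ^ 2)
      / (2 - 2 * θ ^ 2 * c ^ 2)) / Real.sqrt (1 - θ ^ 2 * c ^ 2) with hg
  have hgm : Measurable g := by
    apply Measurable.div _ measurable_const
    exact (Measurable.div ((by fun_prop : Measurable fun p : ℝ × ℝ =>
      2 * p.1 * p.2 * c - θ * (p.1 ^ 2 + p.2 ^ 2) * c ^ 2)) measurable_const).exp
  set B : Measure ℝ := bernoulliRademacher ρ with hB
  have hBdef : B = (ENNReal.ofReal (ρ / 2)) • Measure.dirac s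
      + (ENNReal.ofReal (ρ / 2)) • Measure.dirac (-s)
      + (ENNReal.ofReal (1 - ρ)) • Measure.dirac 0 := rfl
  have hhalf : (0 : ℝ) ≤ ρ / 2 := by linarith
  have h1ρ : (0 : ℝ) ≤ 1 - ρ := by linarith
  -- expand (dirac x).prod B
  have hx : ∀ x : ℝ, (Measure.dirac x).prod B
      = (ENNReal.ofReal (ρ / 2)) • Measure.dirac (x, s)
      + (ENNReal.ofReal (ρ / 2)) • Measure.dirac (x, -s)
      + (ENNReal.ofReal (1 - ρ)) • Measure.dirac (x, 0) := by
    intro x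
    rw [hBdef, Measure.prod_add, Measure.prod_add, prod_smul', prod_smul', prod_smul',
      Measure.dirac_prod_dirac, Measure.dirac_prod_dirac, Measure.dirac_prod_dirac]
  have hIx : ∀ x : ℝ, Integrable g ((Measure.dirac x).prod B) := by
    intro x
    rw [hx x]
    exact ((integrable_smul_dirac hgm _ _).add_measure
      (integrable_smul_dirac hgm _ _)).add_measure (integrable_smul_dirac hgm _ _)
  have hJ : ∀ x : ℝ, ∫ p, g p ∂((Measure.dirac x).prod B)
      = ρ / 2 * g (x, s) + ρ / 2 * g (x, -s) + (1 - ρ) * g (x, 0) := by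
    intro x
    rw [hx x,
      integral_add_measure ((integrable_smul_dirac hgm _ _).add_measure
        (integrable_smul_dirac hgm _ _)) (integrable_smul_dirac hgm _ _),
      integral_add_measure (integrable_smul_dirac hgm _ _) (integrable_smul_dirac hgm _ _)]
    simp [integral_smul_measure, ENNReal.toReal_ofReal hhalf, ENNReal.toReal_ofReal h1ρ]
  have hprod : B.prod B
      = (ENNReal.ofReal (ρ / 2)) • ((Measure.dirac s).prod B)
      + (ENNReal.ofReal (ρ / 2)) • ((Measure.dirac (-s)).prod B)
      + (ENNReal.ofReal (1 - ρ)) • ((Measure.dirac 0).prod B) := by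
    nth_rewrite 1 [hBdef]
    rw [Measure.add_prod, Measure.add_prod, smul_prod', smul_prod', smul_prod']
  have main : ∫ p, g p ∂(B.prod B)
      = ρ / 2 * (∫ p, g p ∂((Measure.dirac s).prod B))
      + ρ / 2 * (∫ p, g p ∂((Measure.dirac (-s)).prod B))
      + (1 - ρ) * (∫ p, g p ∂((Measure.dirac 0).prod B)) := by
    rw [hprod,
      integral_add_measure ((integrable_ofReal_smul (hIx s) _).add_measure
        (integrable_ofReal_smul (hIx (-s)) _)) (integrable_ofReal_smul (hIx 0) _),
      integral_add_measure (integrable_ofReal_smul (hIx s) _)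
        (integrable_ofReal_smul (hIx (-s)) _)]
    simp [integral_smul_measure, ENNReal.toReal_ofReal hhalf, ENNReal.toReal_ofReal h1ρ]
  -- exponent computations
  have hs2 : s ^ 2 = 1 / ρ := by
    rw [hs, div_pow, one_pow, Real.sq_sqrt hρ0.le]
  have hA : (0 : ℝ) < 1 - θ ^ 2 * c ^ 2 := by linarith
  have hD : (2 : ℝ) - 2 * θ ^ 2 * c ^ 2 ≠ 0 := by nlinarith
  have habs : |θ * c| < 1 := by
    nlinarith [sq_abs (θ * c), abs_nonneg (θ * c), hc]
  have h1p : (1 : ℝ) + θ * c ≠ 0 := by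
    have := (abs_lt.mp habs).1; linarith
  have h1m : (1 : ℝ) - θ * c ≠ 0 := by
    have := (abs_lt.mp habs).2; linarith
  have hρ0' : ρ ≠ 0 := hρ0.ne'
  have e1 : (2 * s * s * c - θ * (s ^ 2 + s ^ 2) * c ^ 2) / (2 - 2 * θ ^ 2 * c ^ 2)
      = c / (ρ * (1 + θ * c)) := by
    rw [show 2 * s * s * c - θ * (s ^ 2 + s ^ 2) * c ^ 2
      = (2 * c - 2 * θ * c ^ 2) * s ^ 2 by ring, hs2]
    rw [div_eq_div_iff hD (mul_ne_zero hρ0' h1p)]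
    field_simp
    ring
  have e1' : (2 * -s * -s * c - θ * ((-s) ^ 2 + (-s) ^ 2) * c ^ 2) / (2 - 2 * θ ^ 2 * c ^ 2)
      = c / (ρ * (1 + θ * c)) := by
    rw [show 2 * -s * -s * c - θ * ((-s) ^ 2 + (-s) ^ 2) * c ^ 2
      = (2 * c - 2 * θ * c ^ 2) * s ^ 2 by ring, hs2]
    rw [div_eq_div_iff hD (mul_ne_zero hρ0' h1p)]
    field_simp
    ring
  have e2 : (2 * s * -s * c - θ * (s ^ 2 + (-s) ^ 2) * c ^ 2) / (2 - 2 * θ ^ 2 * c ^ 2)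
      = -c / (ρ * (1 - θ * c)) := by
    rw [show 2 * s * -s * c - θ * (s ^ 2 + (-s) ^ 2) * c ^ 2
      = (-2 * c - 2 * θ * c ^ 2) * s ^ 2 by ring, hs2]
    rw [div_eq_div_iff hD (mul_ne_zero hρ0' h1m)]
    field_simp
    ring
  have e2' : (2 * -s * s * c - θ * ((-s) ^ 2 + s ^ 2) * c ^ 2) / (2 - 2 * θ ^ 2 * c ^ 2)
      = -c / (ρ * (1 - θ * c)) := by
    rw [show 2 * -s * s * c - θ * ((-s) ^ 2 + s ^ 2) * c ^ 2
      = (-2 * c - 2 * θ * c ^ 2) * s ^ 2 by ring, hs2]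
    rw [div_eq_div_iff hD (mul_ne_zero hρ0' h1m)]
    field_simp
    ring
  have e3 : (2 * s * 0 * c - θ * (s ^ 2 + 0 ^ 2) * c ^ 2) / (2 - 2 * θ ^ 2 * c ^ 2)
      = -(1 / ρ) * (θ * c ^ 2 / (2 - 2 * θ ^ 2 * c ^ 2)) := by
    rw [show 2 * s * 0 * c - θ * (s ^ 2 + 0 ^ 2) * c ^ 2
      = (-(θ * c ^ 2)) * s ^ 2 by ring, hs2]
    field_simp
  have e3' : (2 * -s * 0 * c - θ * ((-s) ^ 2 + 0 ^ 2) * c ^ 2) / (2 - 2 * θ ^ 2 * c ^ 2)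
      = -(1 / ρ) * (θ * c ^ 2 / (2 - 2 * θ ^ 2 * c ^ 2)) := by
    rw [show 2 * -s * 0 * c - θ * ((-s) ^ 2 + 0 ^ 2) * c ^ 2
      = (-(θ * c ^ 2)) * s ^ 2 by ring, hs2]
    field_simp
  have e3'' : (2 * 0 * s * c - θ * (0 ^ 2 + s ^ 2) * c ^ 2) / (2 - 2 * θ ^ 2 * c ^ 2)
      = -(1 / ρ) * (θ * c ^ 2 / (2 - 2 * θ ^ 2 * c ^ 2)) := by
    rw [show 2 * 0 * s * c - θ * (0 ^ 2 + s ^ 2) * c ^ 2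
      = (-(θ * c ^ 2)) * s ^ 2 by ring, hs2]
    field_simp
  have e3''' : (2 * 0 * -s * c - θ * (0 ^ 2 + (-s) ^ 2) * c ^ 2) / (2 - 2 * θ ^ 2 * c ^ 2)
      = -(1 / ρ) * (θ * c ^ 2 / (2 - 2 * θ ^ 2 * c ^ 2)) := by
    rw [show 2 * 0 * -s * c - θ * (0 ^ 2 + (-s) ^ 2) * c ^ 2
      = (-(θ * c ^ 2)) * s ^ 2 by ring, hs2]
    field_simp
  have e4 : (2 * 0 * 0 * c - θ * ((0:ℝ) ^ 2 + 0 ^ 2) * c ^ 2) / (2 - 2 * θ ^ 2 * c ^ 2) = 0 := by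
    simp
  show ∫ p, g p ∂(B.prod B) = _
  rw [main, hJ s, hJ (-s), hJ 0]
  simp only [hg]
  rw [e1, e1', e2, e2', e3, e3', e3'', e3''', e4, Real.exp_zero]
  ring
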